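/- Let G be in class B with diam(G) ≥ 4 and T_G its associated tree. Then every central vertex of T_G is a central vertex of G, i.e., C(T_G) ⊆ C(G). -/

import Mathlib

open SimpleGraph

variable {V : Type*}

/-- `v` is a cut-vertex of the graph `G`: deleting `v` disconnects `G`. -/
def CutVtx (G : SimpleGraph V) (v : V) : Prop :=
  ¬ (G.induce {v}ᶜ).Connected

/-- A nonseparable graph: connected and with no cut-vertex. -/
def NoCutVtx {W : Type*} (H : SimpleGraph W) : Prop :=
  H.Connected ∧ ∀ w : W, (H.induce {w}ᶜ).Connected

/-- `B` is (the vertex set of) a block of `G`: a maximal nonseparable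
induced subgraph. -/
def IsBlockSet (G : SimpleGraph V) (B : Set V) : Prop :=
  NoCutVtx (G.induce B) ∧ ∀ C : Set V, B ⊆ C → NoCutVtx (G.induce C) → B = C

/-- The set of cut-vertices of `G`. -/
def cutSet (G : SimpleGraph V) : Set V := {v | CutVtx G v}

/-- The set `B` induces a complete bipartite graph in `G` with
bipartition `(V1, V2)`. -/
def CompBipOn (G : SimpleGraph V) (B V1 V2 : Set V) : Prop :=
  V1.Nonempty ∧ V2.Nonempty ∧ Disjoint V1 V2 ∧ V1 ∪ V2 = B ∧
    ∀ x ∈ B, ∀ y ∈ B, (G.Adj x y ↔ (x ∈ V1 ∧ y ∈ V2) ∨ (x ∈ V2 ∧ y ∈ V1))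

/-- A bi-block graph: a connected graph all of whose blocks are
complete bipartite. -/
def BiBlockGraph (G : SimpleGraph V) : Prop :=
  G.Connected ∧ ∀ B : Set V, IsBlockSet G B → ∃ V1 V2 : Set V, CompBipOn G B V1 V2

/-- The class 𝓑: bi-block graphs with at least two blocks and at most two
cut-vertices in each block. -/
def ClassB (G : SimpleGraph V) : Prop :=
  BiBlockGraph G ∧
  (∃ B1 B2 : Set V, IsBlockSet G B1 ∧ IsBlockSet G B2 ∧ B1 ≠ B2) ∧
  ∀ B : Set V, IsBlockSet G B → (B ∩ cutSet G).ncard ≤ 2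

/-- `S` is an admissible vertex set for the associated tree `T_G`:
it contains all cut-vertices of `G`, both vertices of every `K_{1,1}` block,
exactly one non-cut-vertex from each partite set of every leaf block,
exactly one non-cut-vertex from the cut-vertex-free partite set of every
bridge block whose two cut-vertices share a partite set, and no other
vertices. -/
def AssocSet (G : SimpleGraph V) (S : Set V) : Prop :=
  (∀ v, CutVtx G v → v ∈ S) ∧
  ∀ B V1 V2 : Set V, IsBlockSet G B → CompBipOn G B V1 V2 →
    ((V1.ncard = 1 ∧ V2.ncard = 1) → B ⊆ S) ∧
    (¬ (V1.ncard = 1 ∧ V2.ncard = 1) →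
      (((B ∩ cutSet G).ncard = 1) →
          (S ∩ (V1 \ cutSet G)).ncard = 1 ∧ (S ∩ (V2 \ cutSet G)).ncard = 1) ∧
      (((B ∩ cutSet G).ncard = 2) →
          (((V1 ∩ cutSet G).ncard = 2) →
              (S ∩ (V2 \ cutSet G)).ncard = 1 ∧ S ∩ (V1 \ cutSet G) = ∅) ∧
          (((V2 ∩ cutSet G).ncard = 2) →
              (S ∩ (V1 \ cutSet G)).ncard = 1 ∧ S ∩ (V2 \ cutSet G) = ∅) ∧
          (((V1 ∩ cutSet G).ncard = 1 ∧ (V2 ∩ cutSet G).ncard = 1) →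
              S ∩ (B \ cutSet G) = ∅)))

/-- The eccentricity of a vertex. -/
noncomputable def ecc (G : SimpleGraph V) (v : V) : ℕ := sSup (Set.range (G.dist v))

/-- The diameter of a graph. -/
noncomputable def gdiam (G : SimpleGraph V) : ℕ := sSup (Set.range (ecc G))

/-- The radius of a graph. -/
noncomputable def gradius (G : SimpleGraph V) : ℕ := sInf (Set.range (ecc G))

/-- The center of a graph: vertices of minimum eccentricity. -/
noncomputable def gcenter (G : SimpleGraph V) : Set V := {v | ecc G v = gradius G}

/-- The eccentricity matrix of `G`. -/
noncomputable def eccMatrix (G : SimpleGraph V) : Matrix V V ℝ := fun u v =>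
  if G.dist u v = min (ecc G u) (ecc G v) then (G.dist u v : ℝ) else 0

/-- The spectrum of the eccentricity matrix of `G` is symmetric with respect
to the origin: `μ` is an eigenvalue with multiplicity `l` iff `-μ` is. -/
def SpectrumSymm [Fintype V] [DecidableEq V] (G : SimpleGraph V) : Prop :=
  ∀ (hH : (eccMatrix G).IsHermitian) (μ : ℝ),
    {i | hH.eigenvalues i = μ}.ncard = {i | hH.eigenvalues i = -μ}.ncard

/-- A vertex is diametrically distinguished if it lies on some diametrical
path and is adjacent to some central vertex. -/
noncomputable def DiamDistinguished (G : SimpleGraph V) (u : V) : Prop :=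
  (∃ (a b : V) (p : G.Walk a b), p.IsPath ∧ p.length = G.dist a b ∧
      G.dist a b = gdiam G ∧ u ∈ p.support) ∧
  ∃ z ∈ gcenter G, G.Adj u z


/-! ### Auxiliary development -/

section AuxBlocks
set_option linter.unusedSectionVars false

variable {V : Type*}

/-- Walks of `G` staying inside a set `C`. -/
def WIn (G : SimpleGraph V) (C : Set V) (a b : V) : Prop :=
  ∃ w : G.Walk a b, ∀ x ∈ w.support, x ∈ C

variable {G : SimpleGraph V}

lemma walk_induce {C : Set V} : ∀ {a b : V} (w : G.Walk a b), (∀ x ∈ w.support, x ∈ C) →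
    ∀ (ha : a ∈ C) (hb : b ∈ C),
    ∃ w' : (G.induce C).Walk ⟨a, ha⟩ ⟨b, hb⟩,
      w'.length = w.length ∧ ∀ y ∈ w'.support, y.1 ∈ w.support
  | a, _, Walk.nil, _, ha, hb => ⟨Walk.nil, by simp⟩
  | a, b, Walk.cons hadj w, h, ha, hb => by
    rename_i u
    have hu : u ∈ C := h u (by simp)
    obtain ⟨w', hl, hs⟩ := walk_induce w (fun x hx => h x (by simp [hx])) hu hb
    refine ⟨Walk.cons (by simpa using hadj) w', by simp [hl], ?_⟩
    intro y hy
    rcases List.mem_cons.1 (by simpa using hy) with h1 | h1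
    · simp [h1]
    · simpa using Or.inr (hs _ h1)

lemma walk_down {C : Set V} : ∀ {a b : C} (w : (G.induce C).Walk a b),
    ∃ w' : G.Walk a.1 b.1, w'.length = w.length ∧
      ∀ x ∈ w'.support, ∃ hx : x ∈ C, (⟨x, hx⟩ : C) ∈ w.support
  | a, _, Walk.nil => ⟨Walk.nil, by simp⟩
  | a, b, Walk.cons hadj w => by
    obtain ⟨w', hl, hs⟩ := walk_down w
    refine ⟨Walk.cons (by exact hadj) w', by change w'.length + 1 = w.length + 1; rw [hl], ?_⟩
    intro x hx
    rcases List.mem_cons.1 (show x ∈ a.1 :: w'.support from hx) with h1 | h1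
    · exact h1 ▸ ⟨a.2, by simp⟩
    · obtain ⟨hx1, hx2⟩ := hs x h1
      exact ⟨hx1, by simp [hx2]⟩

lemma induce_connected_iff {C : Set V} :
    (G.induce C).Connected ↔ C.Nonempty ∧ ∀ a ∈ C, ∀ b ∈ C, WIn G C a b := by
  constructor
  · intro h
    refine ⟨?_, ?_⟩
    · obtain ⟨⟨a, ha⟩⟩ := h.nonempty
      exact ⟨a, ha⟩
    · intro a ha b hb
      obtain ⟨w⟩ := h.preconnected ⟨a, ha⟩ ⟨b, hb⟩
      obtain ⟨w', _, hs⟩ := walk_down w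
      exact ⟨w', fun x hx => (hs x hx).1⟩
  · rintro ⟨⟨c, hc⟩, h⟩
    rw [connected_iff]
    refine ⟨?_, ⟨⟨c, hc⟩⟩⟩
    rintro ⟨a, ha⟩ ⟨b, hb⟩
    obtain ⟨w, hw⟩ := h a ha b hb
    obtain ⟨w', _, _⟩ := walk_induce w hw ha hb
    exact w'.reachable

lemma induce_induce_connected_iff {C : Set V} (x : C) :
    ((G.induce C).induce {x}ᶜ).Connected ↔
      (C \ {x.1}).Nonempty ∧ ∀ a ∈ C \ {x.1}, ∀ b ∈ C \ {x.1}, WIn G (C \ {x.1}) a b := by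
  rw [induce_connected_iff]
  constructor
  · rintro ⟨⟨⟨a, ha⟩, ha'⟩, h⟩
    refine ⟨⟨a, ha, by simpa [Subtype.ext_iff] using ha'⟩, ?_⟩
    rintro a ⟨haC, hax⟩ b ⟨hbC, hbx⟩
    obtain ⟨w, hw⟩ := h ⟨a, haC⟩ (by simpa [Subtype.ext_iff] using hax)
      ⟨b, hbC⟩ (by simpa [Subtype.ext_iff] using hbx)
    obtain ⟨w', _, hs⟩ := walk_down w
    refine ⟨w', fun y hy => ?_⟩
    obtain ⟨hy1, hy2⟩ := hs y hy
    refine ⟨hy1, ?_⟩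
    have := hw _ hy2
    simpa [Subtype.ext_iff] using this
  · rintro ⟨⟨a, haC, hax⟩, h⟩
    refine ⟨⟨⟨a, haC⟩, by simpa [Subtype.ext_iff] using hax⟩, ?_⟩
    rintro ⟨a, haC⟩ hax ⟨b, hbC⟩ hbx
    obtain ⟨w, hw⟩ := h a ⟨haC, by simpa [Subtype.ext_iff] using hax⟩ b
      ⟨hbC, by simpa [Subtype.ext_iff] using hbx⟩
    obtain ⟨w', hl, hs⟩ := walk_induce (C := C) w (fun y hy => (hw y hy).1) haC hbC
    refine ⟨w', fun y hy => ?_⟩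
    have := hw _ (hs y hy)
    simpa [Subtype.ext_iff] using this.2


section Ecc
variable [Fintype V]

lemma dist_le_ecc (v w : V) : G.dist v w ≤ ecc G v :=
  le_csSup ((Set.finite_range _).bddAbove) ⟨w, rfl⟩

lemma ecc_exists (v : V) : ∃ w, G.dist v w = ecc G v := by
  have : ecc G v ∈ Set.range (G.dist v) :=
    Nat.sSup_mem ⟨_, ⟨v, rfl⟩⟩ ((Set.finite_range _).bddAbove)
  exact this

lemma ecc_le {v : V} {n : ℕ} (h : ∀ w, G.dist v w ≤ n) : ecc G v ≤ n :=
  csSup_le ⟨_, ⟨v, rfl⟩⟩ (by rintro _ ⟨w, rfl⟩; exact h w)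

lemma gradius_le_ecc (v : V) : gradius G ≤ ecc G v := Nat.sInf_le ⟨v, rfl⟩

lemma gradius_exists [Nonempty V] : ∃ v, ecc G v = gradius G := by
  have : gradius G ∈ Set.range (ecc G) := Nat.sInf_mem ⟨_, ⟨Classical.arbitrary V, rfl⟩⟩
  exact this

lemma ecc_le_gdiam (v : V) : ecc G v ≤ gdiam G :=
  le_csSup ((Set.finite_range _).bddAbove) ⟨v, rfl⟩

lemma gdiam_le [Nonempty V] {n : ℕ} (h : ∀ v, ecc G v ≤ n) : gdiam G ≤ n :=
  csSup_le ⟨_, ⟨Classical.arbitrary V, rfl⟩⟩ (by rintro _ ⟨v, rfl⟩; exact h v)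

lemma two_le_gradius [Nonempty V] (hc : G.Connected) (h4 : 4 ≤ gdiam G) : 2 ≤ gradius G := by
  obtain ⟨c, hcr⟩ := gradius_exists (G := G)
  have hd : gdiam G ≤ 2 * gradius G := by
    refine gdiam_le fun v => ecc_le fun w => ?_
    calc G.dist v w ≤ G.dist v c + G.dist c w := hc.dist_triangle
    _ ≤ ecc G c + ecc G c := by
        gcongr
        · rw [SimpleGraph.dist_comm]; exact dist_le_ecc c v
        · exact dist_le_ecc c w
    _ = 2 * gradius G := by rw [hcr]; ring
  omega

end Ecc

lemma firstHit {C : Set V} : ∀ {a b : V} (w : G.Walk a b), b ∈ C →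
    ∃ (c : V) (w1 : G.Walk a c) (w2 : G.Walk c b),
      c ∈ C ∧ (∀ x ∈ w1.support, x ∈ C → x = c) ∧ (∀ x ∈ w1.support, x ∈ w.support) ∧
      w1.length + w2.length = w.length
  | a, _, Walk.nil, hb => ⟨a, Walk.nil, Walk.nil, hb, by simp, by simp, by simp⟩
  | a, b, Walk.cons hadj w, hb => by
    rename_i u
    by_cases ha : a ∈ C
    · exact ⟨a, Walk.nil, Walk.cons hadj w, ha, by simp, by simp, by simp⟩
    · obtain ⟨c, w1, w2, hc, hmem, hsub, hlen⟩ := firstHit w hb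
      refine ⟨c, Walk.cons hadj w1, w2, hc, ?_, ?_, by simp [← hlen]; omega⟩
      · intro x hx hxC
        rcases List.mem_cons.1 (by simpa using hx) with h1 | h1
        · exact absurd (h1 ▸ hxC) ha
        · exact hmem x h1 hxC
      · intro x hx
        rcases List.mem_cons.1 (by simpa using hx) with h1 | h1
        · simp [h1]
        · simp [hsub x h1]

lemma exists_adj_end {a c : V} (w : G.Walk a c) (h : a ≠ c) :
    ∃ u, G.Adj u c ∧ u ∈ w.support ∧ u ≠ c := by
  cases hw : w.reverse with
  | nil =>
    exfalso
    have : w.length = 0 := by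
      have := congrArg Walk.length hw
      simpa using this
    exact h (by cases w with | nil => rfl | cons h' w' => simp at this)
  | @cons _ u _ hadj p =>
    refine ⟨u, hadj.symm, ?_, hadj.ne'⟩
    have : u ∈ w.reverse.support := by rw [hw]; simp
    simpa [Walk.support_reverse] using this

lemma takeUntil_dropUntil_eq [DecidableEq V] {a b x y : V} (R : G.Walk a b) (hR : R.IsPath)
    (hy : y ∈ R.support) (hx1 : x ∈ (R.takeUntil y hy).support)
    (hx2 : x ∈ (R.dropUntil y hy).support) : x = y := by
  by_contra hxy
  have hsupp := R.take_spec hy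
  have hnd : R.support.Nodup := hR.2
  rw [← hsupp, Walk.support_append] at hnd
  have hx2' : x ∈ (R.dropUntil y hy).support.tail := by
    have := (R.dropUntil y hy).support_eq_cons
    rw [this] at hx2
    rcases List.mem_cons.1 hx2 with h | h
    · exact absurd h hxy
    · exact h
  exact (List.disjoint_of_nodup_append hnd) hx1 hx2'


namespace WIn

lemma mono {C D : Set V} {a b : V} (h : WIn G C a b) (hsub : C ⊆ D) : WIn G D a b := by
  obtain ⟨w, hw⟩ := h; exact ⟨w, fun x hx => hsub (hw x hx)⟩

lemma refl {C : Set V} {a : V} (ha : a ∈ C) : WIn G C a a :=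
  ⟨Walk.nil, by simpa using ha⟩

lemma symm {C : Set V} {a b : V} (h : WIn G C a b) : WIn G C b a := by
  obtain ⟨w, hw⟩ := h
  exact ⟨w.reverse, fun x hx => hw x (by simpa [Walk.support_reverse] using hx)⟩

lemma trans {C : Set V} {a b c : V} (h1 : WIn G C a b) (h2 : WIn G C b c) : WIn G C a c := by
  obtain ⟨w1, hw1⟩ := h1; obtain ⟨w2, hw2⟩ := h2
  refine ⟨w1.append w2, fun x hx => ?_⟩
  rw [Walk.support_append] at hx
  rcases List.mem_append.1 hx with h | h
  · exact hw1 x h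
  · exact hw2 x (List.mem_of_mem_tail h)

end WIn

lemma ear {B : Set V} (hB : IsBlockSet G B) {p q : V}
    (R : G.Walk p q) (hR : R.IsPath) (hpq : p ≠ q) (hp : p ∈ B) (hq : q ∈ B)
    (hmem : ∀ x ∈ R.support, x ∈ B → x = p ∨ x = q)
    {x₀ : V} (hx₀ : x₀ ∈ R.support) (hx₀B : x₀ ∉ B) : False := by
  classical
  set C : Set V := B ∪ {x | x ∈ R.support} with hC
  have hBconn : ∀ a ∈ B, ∀ b ∈ B, WIn G B a b := (induce_connected_iff.1 hB.1.1).2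
  have hBdel : ∀ (x : V), x ∈ B → ((B \ {x}).Nonempty ∧
      ∀ a ∈ B \ {x}, ∀ b ∈ B \ {x}, WIn G (B \ {x}) a b) := by
    intro x hx
    have := hB.1.2 ⟨x, hx⟩
    exact (induce_induce_connected_iff ⟨x, hx⟩).1 this
  have hBC : B ⊆ C := Set.subset_union_left
  have hRC : ∀ x ∈ R.support, x ∈ C := fun x hx => Or.inr hx
  have hCns : NoCutVtx (G.induce C) := by
    constructor
    · rw [induce_connected_iff]
      refine ⟨⟨p, hBC hp⟩, ?_⟩
      have anchor : ∀ a ∈ C, WIn G C a p := by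
        rintro a (ha | ha)
        · exact (hBconn a ha p hp).mono hBC
        · refine ⟨(R.takeUntil a ha).reverse, fun x hx => hRC x ?_⟩
          exact R.support_takeUntil_subset ha (by simpa [Walk.support_reverse] using hx)
      intro a ha b hb
      exact (anchor a ha).trans (anchor b hb).symm
    · rintro ⟨x, hxC⟩
      rw [induce_induce_connected_iff]
      constructor
      · by_cases hxp : x = p
        · exact ⟨q, hBC hq, by simpa [hxp] using hpq.symm⟩
        · exact ⟨p, hBC hp, by simpa using Ne.symm hxp⟩
      · by_cases hxR : x ∈ R.support
        · by_cases hxp : x = p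
          · subst hxp
            have anchor : ∀ a ∈ C \ {x}, WIn G (C \ {x}) a q := by
              rintro a ⟨(haB | haR), hax⟩
              · have hqx : q ∈ B \ {x} := ⟨hq, hpq.symm⟩
                exact ((hBdel x hp).2 a ⟨haB, hax⟩ q hqx).mono
                  (Set.diff_subset_diff_left hBC)
              · refine ⟨R.dropUntil a haR, fun y hy => ⟨hRC y (R.support_dropUntil_subset haR hy), ?_⟩⟩
                intro hyx
                simp only [Set.mem_singleton_iff] at hyx
                subst hyx
                exact hax (Set.mem_singleton_iff.2
                  (takeUntil_dropUntil_eq R hR haR (Walk.start_mem_support _) hy).symm)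
            intro a ha b hb
            exact (anchor a ha).trans (anchor b hb).symm
          · by_cases hxq : x = q
            · subst hxq
              have anchor : ∀ a ∈ C \ {x}, WIn G (C \ {x}) a p := by
                rintro a ⟨(haB | haR), hax⟩
                · have hpx : p ∈ B \ {x} := ⟨hp, hpq⟩
                  exact ((hBdel x hq).2 a ⟨haB, hax⟩ p hpx).mono
                    (Set.diff_subset_diff_left hBC)
                · refine ⟨(R.takeUntil a haR).reverse, fun y hy => ?_⟩
                  rw [Walk.support_reverse, List.mem_reverse] at hy
                  refine ⟨hRC y (R.support_takeUntil_subset haR hy), ?_⟩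
                  intro hyx
                  simp only [Set.mem_singleton_iff] at hyx
                  subst hyx
                  exact (fun h => hax (by simp [h]))
                    (takeUntil_dropUntil_eq R hR haR hy (Walk.end_mem_support _))
              intro a ha b hb
              exact (anchor a ha).trans (anchor b hb).symm
            · have hxB : x ∉ B := fun hxB => by
                rcases hmem x hxR hxB with h | h
                · exact hxp h
                · exact hxq h
              have hBsub : B ⊆ C \ {x} := fun y hy => ⟨hBC hy, fun h => hxB (by
                simp only [Set.mem_singleton_iff] at h; exact h ▸ hy)⟩
              have link : WIn G (C \ {x}) p q := (hBconn p hp q hq).mono hBsub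
              have anchor : ∀ a ∈ C \ {x}, WIn G (C \ {x}) a p ∨ WIn G (C \ {x}) a q := by
                rintro a ⟨(haB | haR), hax⟩
                · exact Or.inl ((hBconn a haB p hp).mono hBsub)
                · by_cases hxa : x ∈ (R.takeUntil a haR).support
                  · refine Or.inr ⟨R.dropUntil a haR, fun y hy => ?_⟩
                    refine ⟨hRC y (R.support_dropUntil_subset haR hy), ?_⟩
                    intro hyx
                    simp only [Set.mem_singleton_iff] at hyx
                    subst hyx
                    exact hax (by simp [takeUntil_dropUntil_eq R hR haR hxa hy])
                  · refine Or.inl ⟨(R.takeUntil a haR).reverse, fun y hy => ?_⟩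
                    rw [Walk.support_reverse, List.mem_reverse] at hy
                    refine ⟨hRC y (R.support_takeUntil_subset haR hy), ?_⟩
                    intro hyx
                    simp only [Set.mem_singleton_iff] at hyx
                    exact hxa (hyx ▸ hy)
              intro a ha b hb
              rcases anchor a ha with h1 | h1 <;> rcases anchor b hb with h2 | h2
              · exact h1.trans h2.symm
              · exact (h1.trans link).trans h2.symm
              · exact (h1.trans link.symm).trans h2.symm
              · exact h1.trans h2.symm
        · -- x ∉ R.support, so x ∈ B
          have hxB : x ∈ B := by
            rcases hxC with h | h
            · exact h
            · exact absurd h hxR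
          have hxp : x ≠ p := fun h => hxR (h ▸ Walk.start_mem_support R)
          have hRsub : ∀ y ∈ R.support, y ∈ C \ {x} :=
            fun y hy => ⟨hRC y hy, fun h => hxR (by
              simp only [Set.mem_singleton_iff] at h; exact h ▸ hy)⟩
          have anchor : ∀ a ∈ C \ {x}, WIn G (C \ {x}) a p := by
            rintro a ⟨(haB | haR), hax⟩
            · have hpx : p ∈ B \ {x} := ⟨hp, Ne.symm hxp⟩
              exact ((hBdel x hxB).2 a ⟨haB, hax⟩ p hpx).mono
                (Set.diff_subset_diff_left hBC)
            · refine ⟨(R.takeUntil a haR).reverse, fun y hy => ?_⟩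
              rw [Walk.support_reverse, List.mem_reverse] at hy
              exact hRsub y (R.support_takeUntil_subset haR hy)
          intro a ha b hb
          exact (anchor a ha).trans (anchor b hb).symm
  have heq := hB.2 C hBC hCns
  have : x₀ ∈ B := by rw [heq]; exact Set.mem_union_right _ hx₀
  exact hx₀B this


/-- Blocks have at least two vertices: useful facts bundled. -/
lemma block_facts {B : Set V} (hB : IsBlockSet G B) :
    B.Nonempty ∧ (∀ a ∈ B, ∀ b ∈ B, WIn G B a b) ∧
    ∀ x ∈ B, ((B \ {x}).Nonempty ∧ ∀ a ∈ B \ {x}, ∀ b ∈ B \ {x}, WIn G (B \ {x}) a b) := by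
  have h1 := induce_connected_iff.1 hB.1.1
  refine ⟨h1.1, h1.2, fun x hx => ?_⟩
  exact (induce_induce_connected_iff ⟨x, hx⟩).1 (hB.1.2 ⟨x, hx⟩)

/-- A vertex of a block with a neighbour outside the block is a cut vertex. -/
lemma boundary_cut {B : Set V} (hB : IsBlockSet G B) {p q : V}
    (hp : p ∈ B) (hq : q ∉ B) (hadj : G.Adj p q) : CutVtx G p := by
  classical
  intro hconn
  obtain ⟨-, hpairs⟩ := induce_connected_iff.1 hconn
  obtain ⟨-, -, hdel⟩ := block_facts hB
  obtain ⟨⟨a, haB, hap⟩, -⟩ := hdel p hp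
  have hap' : a ≠ p := by simpa using hap
  have hqp : q ≠ p := fun h => hq (h ▸ hp)
  obtain ⟨W, hW⟩ := hpairs q (by simpa using hqp) a (by simpa using hap')
  obtain ⟨c, W1, W2, hcB, hmem, hsub, -⟩ := firstHit W haB
  have hWp : ∀ x ∈ W1.support, x ≠ p := fun x hx => by
    have := hW x (hsub x hx); simpa using this
  have hcp : c ≠ p := hWp c (Walk.end_mem_support _)
  have hqB : q ∉ B := hq
  have hqc : q ≠ c := fun h => hq (h ▸ hcB)
  refine ear hB (Walk.cons hadj W1.bypass) ?_ (Ne.symm hcp) hp hcB ?_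
    (x₀ := q) (by simp) hq
  · exact (Walk.bypass_isPath W1).cons (fun h => hWp p (Walk.support_bypass_subset _ h) rfl)
  · intro x hx hxB
    rcases List.mem_cons.1 (by simpa using hx) with h1 | h1
    · exact Or.inl h1
    · exact Or.inr (hmem x (Walk.support_bypass_subset _ h1) hxB)

/-- Two essentially disjoint approaches from `z` to two non-adjacent vertices of a block
are impossible (unique "gate"). -/
lemma two_approach {B : Set V} (hB : IsBlockSet G B) {z c c' : V} (hcc' : c ≠ c')
    (hnadj : ¬ G.Adj c c') (hc : c ∈ B) (hc' : c' ∈ B)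
    (W1 : G.Walk z c) (h1 : ∀ x ∈ W1.support, x ∈ B → x = c)
    (W2 : G.Walk z c') (h2 : ∀ x ∈ W2.support, x ∈ B → x = c') : False := by
  classical
  set R0 : G.Walk c c' := W1.reverse.append W2 with hR0
  have hmem : ∀ x ∈ R0.support, x ∈ B → x = c ∨ x = c' := by
    intro x hx hxB
    rw [Walk.support_append] at hx
    rcases List.mem_append.1 hx with h | h
    · rw [Walk.support_reverse, List.mem_reverse] at h
      exact Or.inl (h1 x h hxB)
    · exact Or.inr (h2 x (List.mem_of_mem_tail h) hxB)
  set R : G.Walk c c' := R0.bypass with hR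
  have hmem' : ∀ x ∈ R.support, x ∈ B → x = c ∨ x = c' :=
    fun x hx => hmem x (Walk.support_bypass_subset _ hx)
  have hRpath : R.IsPath := Walk.bypass_isPath R0
  clear_value R
  cases R with
  | nil => exact hcc' rfl
  | @cons _ u _ hadj R' =>
    have huc : u ≠ c := hadj.ne'
    have hR'path : R'.IsPath ∧ c ∉ R'.support := (Walk.cons_isPath_iff hadj R').1 hRpath
    have huc' : u ≠ c' := by
      intro h
      subst h
      cases R' with
      | nil => exact hnadj hadj
      | cons h' R'' =>
        have hnd := hR'path.1.2
        rw [Walk.support_cons] at hnd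
        exact (List.nodup_cons.1 hnd).1 (Walk.end_mem_support R'')
    have huB : u ∉ B := by
      intro huB
      rcases hmem' u (by simp) huB with h | h
      · exact huc h
      · exact huc' h
    exact ear hB _ hRpath hcc' hc hc' hmem' (x₀ := u) (by simp) huB

/-- every nonseparable set extends to a block -/
lemma exists_block [Fintype V] {A : Set V} (hA : NoCutVtx (G.induce A)) :
    ∃ B : Set V, IsBlockSet G B ∧ A ⊆ B := by
  classical
  set F : Set (Set V) := {C | A ⊆ C ∧ NoCutVtx (G.induce C)} with hF
  have hfin : F.Finite := Set.toFinite _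
  have hne : F.Nonempty := ⟨A, subset_rfl, hA⟩
  obtain ⟨B, hBF, hmax⟩ := Set.Finite.exists_maximalFor Set.ncard F hfin hne
  refine ⟨B, ⟨hBF.2, fun C hBC hC => ?_⟩, hBF.1⟩
  have hCF : C ∈ F := ⟨hBF.1.trans hBC, hC⟩
  have h1 : B.ncard ≤ C.ncard := Set.ncard_le_ncard hBC (Set.toFinite _)
  have h2 := hmax hCF h1
  exact Set.eq_of_subset_of_ncard_le hBC h2.ge (Set.toFinite _)

lemma edge_nonsep {a b : V} (hadj : G.Adj a b) : NoCutVtx (G.induce ({a, b} : Set V)) := by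
  classical
  have hab : a ≠ b := hadj.ne
  constructor
  · rw [induce_connected_iff]
    refine ⟨⟨a, by simp⟩, ?_⟩
    have he : WIn G {a, b} a b := ⟨Walk.cons hadj Walk.nil, by simp⟩
    rintro x (rfl | rfl) y (rfl | rfl)
    · exact ⟨Walk.nil, by simp⟩
    · exact he
    · obtain ⟨w, hw⟩ := he
      exact ⟨w.reverse, fun z hz => hw z (by simpa [Walk.support_reverse] using hz)⟩
    · exact ⟨Walk.nil, by simp⟩
  · rintro ⟨x, hx⟩
    rw [induce_induce_connected_iff]
    constructor
    · rcases hx with rfl | rfl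
      · exact ⟨b, by simp [hab.symm, Ne.symm hab]⟩
      · exact ⟨a, by simp [hab]⟩
    · rintro u ⟨hu, hux⟩ v ⟨hv, hvx⟩
      have huv : u = v := by
        rcases hx with rfl | rfl
        · rcases hu with rfl | rfl
          · simp at hux
          · rcases hv with rfl | rfl
            · simp at hvx
            · rfl
        · rcases hu with rfl | rfl
          · rcases hv with rfl | rfl
            · rfl
            · simp at hvx
          · simp at hux
      subst huv
      refine ⟨Walk.nil, fun y hy => ?_⟩
      simp only [Walk.support_nil, List.mem_singleton] at hy
      subst hy
      exact ⟨hu, hux⟩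

lemma block_of_adj [Fintype V] {a b : V} (hadj : G.Adj a b) :
    ∃ B : Set V, IsBlockSet G B ∧ a ∈ B ∧ b ∈ B := by
  obtain ⟨B, hB, hsub⟩ := exists_block (edge_nonsep hadj)
  exact ⟨B, hB, hsub (by simp), hsub (by simp)⟩

lemma block_meets_cut [Fintype V] {B : Set V} (hG : ClassB G) (hB : IsBlockSet G B) :
    (B ∩ cutSet G).Nonempty := by
  classical
  by_contra hemp
  rw [Set.not_nonempty_iff_eq_empty] at hemp
  by_cases huniv : B = Set.univ
  · obtain ⟨B1, B2, h1, h2, hne⟩ := hG.2.1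
    have e1 : B1 = Set.univ := h1.2 Set.univ (Set.subset_univ _) (huniv ▸ hB.1)
    have e2 : B2 = Set.univ := h2.2 Set.univ (Set.subset_univ _) (huniv ▸ hB.1)
    exact hne (e1.trans e2.symm)
  · obtain ⟨q, hq⟩ : ∃ q, q ∉ B := by
      by_contra h
      push_neg at h
      exact huniv (Set.eq_univ_of_forall h)
    obtain ⟨b, hb⟩ := (block_facts hB).1
    obtain ⟨W⟩ := hG.1.1.preconnected q b
    obtain ⟨c, W1, W2, hcB, hmem, -, -⟩ := firstHit W hb
    have hqc : q ≠ c := fun h => hq (h ▸ hcB)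
    obtain ⟨u, huc, huW, hune⟩ := exists_adj_end W1 hqc
    have huB : u ∉ B := fun h => hune (hmem u huW h)
    have : CutVtx G c := boundary_cut hB hcB huB huc.symm
    have : c ∈ B ∩ cutSet G := ⟨hcB, this⟩
    simp [hemp] at this

/-- separation by a vertex -/
def VSep (G : SimpleGraph V) (c a b : V) : Prop := ∀ w : G.Walk a b, c ∈ w.support

lemma sep_exists (hconn : G.Connected) {c z : V} (hc : CutVtx G c) (hz : z ≠ c) :
    ∃ w, w ≠ c ∧ VSep G c z w := by
  classical
  have h1 : ¬ (({c}ᶜ : Set V).Nonempty ∧ ∀ a ∈ ({c}ᶜ : Set V), ∀ b ∈ ({c}ᶜ : Set V),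
      WIn G {c}ᶜ a b) := fun h => hc (induce_connected_iff.2 h)
  push_neg at h1
  obtain ⟨a, ha, b, hb, hab⟩ := h1 ⟨z, by simpa using hz⟩
  have hsep : VSep G c a b := by
    intro w
    by_contra hcw
    exact hab ⟨w, fun x hx => Set.mem_compl_singleton_iff.2 (fun h => hcw (h ▸ hx))⟩
  have key : VSep G c z a ∨ VSep G c z b := by
    by_contra h
    push_neg at h
    obtain ⟨h1', h2'⟩ := h
    simp only [VSep, not_forall] at h1' h2'
    obtain ⟨w1, hw1⟩ := h1'
    obtain ⟨w2, hw2⟩ := h2'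
    have := hsep (w1.reverse.append w2)
    rw [Walk.support_append] at this
    rcases List.mem_append.1 this with h | h
    · rw [Walk.support_reverse, List.mem_reverse] at h
      exact hw1 h
    · exact hw2 (List.mem_of_mem_tail h)
  rcases key with h | h
  · exact ⟨a, by simpa using ha, h⟩
  · exact ⟨b, by simpa using hb, h⟩

lemma sep_dist (hconn : G.Connected) {c z w : V} (hsep : VSep G c z w) :
    G.dist z c + G.dist c w ≤ G.dist z w := by
  classical
  obtain ⟨W, hW⟩ := (hconn z w).exists_walk_length_eq_dist
  have hcW := hsep W
  have h1 : G.dist z c ≤ (W.takeUntil c hcW).length := SimpleGraph.dist_le _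
  have h2 : G.dist c w ≤ (W.dropUntil c hcW).length := SimpleGraph.dist_le _
  have h3 : (W.takeUntil c hcW).length + (W.dropUntil c hcW).length = W.length := by
    have := congrArg Walk.length (W.take_spec hcW)
    rwa [Walk.length_append] at this
  omega


section Bip
variable {B V1 V2 : Set V}

lemma compBip_symm (h : CompBipOn G B V1 V2) : CompBipOn G B V2 V1 := by
  obtain ⟨h1, h2, h3, h4, h5⟩ := h
  exact ⟨h2, h1, h3.symm, by rw [Set.union_comm]; exact h4,
    fun x hx y hy => by rw [h5 x hx y hy]; tauto⟩

lemma compBip_sub1 (h : CompBipOn G B V1 V2) : V1 ⊆ B := h.2.2.2.1 ▸ Set.subset_union_left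
lemma compBip_sub2 (h : CompBipOn G B V1 V2) : V2 ⊆ B := h.2.2.2.1 ▸ Set.subset_union_right

lemma compBip_adj (h : CompBipOn G B V1 V2) {x y : V} (hx : x ∈ V1) (hy : y ∈ V2) :
    G.Adj x y :=
  (h.2.2.2.2 x (compBip_sub1 h hx) y (compBip_sub2 h hy)).2 (Or.inl ⟨hx, hy⟩)

lemma compBip_nadj (h : CompBipOn G B V1 V2) {x y : V} (hx : x ∈ V1) (hy : y ∈ V1) :
    ¬ G.Adj x y := by
  intro hadj
  rcases (h.2.2.2.2 x (compBip_sub1 h hx) y (compBip_sub1 h hy)).1 hadj with ⟨-, h2⟩ | ⟨h2, -⟩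
  · exact Set.disjoint_left.1 h.2.2.1 hy h2
  · exact Set.disjoint_left.1 h.2.2.1 hx h2

lemma compBip_opp (h : CompBipOn G B V1 V2) {x y : V} (hx : x ∈ V1) (hy : y ∈ B)
    (hadj : G.Adj x y) : y ∈ V2 := by
  rcases (h.2.2.2.2 x (compBip_sub1 h hx) y hy).1 hadj with ⟨-, h2⟩ | ⟨h2, -⟩
  · exact h2
  · exact absurd hx (fun hx' => Set.disjoint_left.1 h.2.2.1 hx' h2)

lemma compBip_dist2 (h : CompBipOn G B V1 V2) {x y : V} (hx : x ∈ B) (hy : y ∈ B) :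
    G.dist x y ≤ 2 := by
  have key : ∀ {W1 W2 : Set V}, CompBipOn G B W1 W2 → x ∈ W1 → G.dist x y ≤ 2 := by
    intro W1 W2 hb hx1
    rcases (hb.2.2.2.1 ▸ hy : y ∈ W1 ∪ W2) with hy1 | hy2
    · by_cases hxy : x = y
      · simp [hxy, SimpleGraph.dist_self]
      · obtain ⟨t, ht⟩ := hb.2.1
        simpa using SimpleGraph.dist_le (Walk.cons (compBip_adj hb hx1 ht)
          (Walk.cons (compBip_adj hb hy1 ht).symm Walk.nil))
    · have h1 : G.dist x y ≤ 1 := by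
        simpa using SimpleGraph.dist_le (Walk.cons (compBip_adj hb hx1 hy2) Walk.nil)
      omega
  rcases (h.2.2.2.1 ▸ hx : x ∈ V1 ∪ V2) with h1 | h1
  · exact key h h1
  · exact key (compBip_symm h) h1

end Bip

lemma adj_of_dist_eq_one {x y : V} (h : G.dist x y = 1) : G.Adj x y := by
  have hr : G.Reachable x y := by
    by_contra hr
    rw [SimpleGraph.dist_eq_zero_iff_eq_or_not_reachable.2 (Or.inr hr)] at h
    exact one_ne_zero h.symm
  obtain ⟨w, hw⟩ := hr.exists_walk_length_eq_dist
  rw [h] at hw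
  cases w with
  | nil => simp at hw
  | cons hadj w' =>
    cases w' with
    | nil => exact hadj
    | cons h' w'' => simp [Walk.length_cons] at hw

lemma dist_pos_of_ne {x y : V} (hconn : G.Connected) (h : x ≠ y) : 1 ≤ G.dist x y := by
  rcases Nat.eq_zero_or_pos (G.dist x y) with h0 | h1
  · rcases SimpleGraph.dist_eq_zero_iff_eq_or_not_reachable.1 h0 with h' | h'
    · exact absurd h' h
    · exact absurd (hconn x y) h'
  · exact h1

/-- neighbour-set surgery: if `N(x) ⊆ N(s)` then `s` is at most as far from any `z ≠ x`. -/
lemma dist_le_of_nbr_subset (hconn : G.Connected) {x s : V}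
    (hxs : ∀ u, G.Adj x u → G.Adj s u) {z : V} (hz : z ≠ x) :
    G.dist z s ≤ G.dist z x := by
  obtain ⟨W, hW⟩ := (hconn z x).exists_walk_length_eq_dist
  cases hrev : W.reverse with
  | nil => exact absurd rfl hz
  | @cons _ u _ hadj W' =>
    have hlen : W'.length + 1 = W.length := by
      have := congrArg Walk.length hrev
      simp [Walk.length_cons] at this
      omega
    have hnew := SimpleGraph.dist_le (W'.reverse.concat (hxs u hadj).symm)
    rw [Walk.length_concat, Walk.length_reverse] at hnew
    omega

variable {S : Set V}

lemma part_meets_S [Fintype V] (hG : ClassB G) (hS : AssocSet G S) {B V1 V2 : Set V}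
    (hB : IsBlockSet G B) (hbip : CompBipOn G B V1 V2) : (S ∩ V1).Nonempty := by
  classical
  by_cases h1 : (V1 ∩ cutSet G).Nonempty
  · obtain ⟨c, hc1, hc2⟩ := h1
    exact ⟨c, hS.1 c hc2, hc1⟩
  · rw [Set.not_nonempty_iff_eq_empty] at h1
    have hBcut : B ∩ cutSet G = V2 ∩ cutSet G := by
      rw [← hbip.2.2.2.1, Set.union_inter_distrib_right, h1, Set.empty_union]
    have hpos : 0 < (B ∩ cutSet G).ncard :=
      (Set.ncard_pos (Set.toFinite _)).2 (block_meets_cut hG hB)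
    have hle : (B ∩ cutSet G).ncard ≤ 2 := hG.2.2 B hB
    by_cases hK : V1.ncard = 1 ∧ V2.ncard = 1
    · have hsub := (hS.2 B V1 V2 hB hbip).1 hK
      obtain ⟨a, ha⟩ := hbip.1
      exact ⟨a, hsub (compBip_sub1 hbip ha), ha⟩
    · have hbr := (hS.2 B V1 V2 hB hbip).2 hK
      rcases (by omega : (B ∩ cutSet G).ncard = 1 ∨ (B ∩ cutSet G).ncard = 2) with h | h
      · obtain ⟨hc1, -⟩ := hbr.1 h
        obtain ⟨a, ha⟩ := Set.ncard_eq_one.1 hc1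
        have haa : a ∈ S ∩ (V1 \ cutSet G) := by rw [ha]; rfl
        exact ⟨a, haa.1, haa.2.1⟩
      · have h2 : (V2 ∩ cutSet G).ncard = 2 := by rw [← hBcut]; exact h
        obtain ⟨hc1, -⟩ := (hbr.2 h).2.1 h2
        obtain ⟨a, ha⟩ := Set.ncard_eq_one.1 hc1
        have haa : a ∈ S ∩ (V1 \ cutSet G) := by rw [ha]; rfl
        exact ⟨a, haa.1, haa.2.1⟩

lemma exists_nbr (hconn : G.Connected) {u w : V} (huw : u ≠ w) (x : V) :
    ∃ y, G.Adj x y := by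
  obtain ⟨t, ht⟩ : ∃ t, t ≠ x := by
    by_cases h : u = x
    · exact ⟨w, fun hw => huw (h.trans hw.symm)⟩
    · exact ⟨u, h⟩
  obtain ⟨W⟩ := hconn x t
  cases W with
  | nil => exact absurd rfl ht
  | cons hadj _ => exact ⟨_, hadj⟩

lemma rep_exists [Fintype V] (hG : ClassB G) (hS : AssocSet G S)
    (hnbr : ∀ x : V, ∃ y, G.Adj x y) (x : V) :
    ∃ s, s ∈ S ∧ (x ∈ S → s = x) ∧ ∀ u, G.Adj x u → G.Adj s u := by
  classical
  by_cases hxS : x ∈ S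
  · exact ⟨x, hxS, fun _ => rfl, fun u h => h⟩
  · have hxcut : ¬ CutVtx G x := fun h => hxS (hS.1 x h)
    obtain ⟨y, hy⟩ := hnbr x
    obtain ⟨B, hB, hxB, hyB⟩ := block_of_adj hy
    obtain ⟨V1, V2, hbip⟩ := hG.1.2 B hB
    have hNB : ∀ u, G.Adj x u → u ∈ B := by
      intro u hu
      by_contra huB
      exact hxcut (boundary_cut hB hxB huB hu)
    have key : ∀ {W1 W2 : Set V}, CompBipOn G B W1 W2 → x ∈ W1 →
        ∃ s, s ∈ S ∧ (x ∈ S → s = x) ∧ ∀ u, G.Adj x u → G.Adj s u := by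
      intro W1 W2 hb hx1
      obtain ⟨s, hsS, hs1⟩ := part_meets_S hG hS hB hb
      refine ⟨s, hsS, fun h => absurd h hxS, fun u hu => ?_⟩
      exact compBip_adj hb hs1 (compBip_opp hb hx1 (hNB u hu) hu)
    rcases (hbip.2.2.2.1 ▸ hxB : x ∈ V1 ∪ V2) with h1 | h1
    · exact key hbip h1
    · exact key (compBip_symm hbip) h1

lemma rep_walk {rep : V → V} (hrep : ∀ x, rep x ∈ S ∧ ∀ u, G.Adj x u → G.Adj (rep x) u) :
    ∀ {a b : V} (w : G.Walk a b),
      ∃ w' : G.Walk (rep a) (rep b), w'.length = w.length ∧ ∀ x ∈ w'.support, x ∈ S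
  | a, _, Walk.nil => ⟨Walk.nil, by simpa using (hrep a).1⟩
  | a, b, Walk.cons hadj w => by
    rename_i u
    obtain ⟨w', hl, hs⟩ := rep_walk hrep w
    have h1 : G.Adj (rep a) u := (hrep a).2 u hadj
    have h2 : G.Adj (rep u) (rep a) := (hrep u).2 (rep a) h1.symm
    refine ⟨Walk.cons h2.symm w', by simp [hl], ?_⟩
    intro x hx
    rcases List.mem_cons.1 (by simpa using hx) with h | h
    · exact h ▸ (hrep a).1
    · exact hs x h

lemma dist_induce_eq [Fintype V] (hG : ClassB G) (hS : AssocSet G S)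
    (hnbr : ∀ x : V, ∃ y, G.Adj x y) {a b : V} (ha : a ∈ S) (hb : b ∈ S) :
    (G.induce S).dist ⟨a, ha⟩ ⟨b, hb⟩ = G.dist a b := by
  classical
  choose rep hrep1 hrep2 hrep3 using rep_exists hG hS hnbr
  obtain ⟨W, hW⟩ := (hG.1.1 a b).exists_walk_length_eq_dist
  obtain ⟨W', hl, hs⟩ := rep_walk (S := S) (fun x => ⟨hrep1 x, hrep3 x⟩) W
  obtain ⟨W3, hl3, -⟩ := walk_induce (W'.copy (hrep2 a ha) (hrep2 b hb))
    (fun x hx => hs x (by simpa [Walk.support_copy] using hx)) ha hb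
  have hlen3 : W3.length = G.dist a b := by
    rw [hl3, Walk.length_copy, hl, hW]
  have hle1 : (G.induce S).dist ⟨a, ha⟩ ⟨b, hb⟩ ≤ G.dist a b := by
    have := SimpleGraph.dist_le W3
    omega
  have hle2 : G.dist a b ≤ (G.induce S).dist ⟨a, ha⟩ ⟨b, hb⟩ := by
    obtain ⟨W0, hW0⟩ := (W3.reachable).exists_walk_length_eq_dist
    obtain ⟨W0', hl0, -⟩ := walk_down W0
    have hfin : G.dist a b ≤ W0'.length := SimpleGraph.dist_le W0'
    omega
  omega


lemma twin_dist (hconn : G.Connected) {t s z : V} (hzt : z ≠ t) (hzs : z ≠ s)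
    (hN : ∀ u, G.Adj t u ↔ G.Adj s u) : G.dist z s = G.dist z t :=
  le_antisymm (dist_le_of_nbr_subset hconn (fun u h => (hN u).1 h) hzt)
    (dist_le_of_nbr_subset hconn (fun u h => (hN u).2 h) hzs)

lemma part_twin {B W1 W2 : Set V} (hB : IsBlockSet G B)
    (hbip : CompBipOn G B W1 W2) {t s : V} (ht1 : t ∈ W1) (htcut : ¬ CutVtx G t)
    (hs1 : s ∈ W1) (hscut : ¬ CutVtx G s) :
    ∀ u, G.Adj t u ↔ G.Adj s u := by
  have key : ∀ {x : V}, x ∈ W1 → ¬CutVtx G x → ∀ u, (G.Adj x u ↔ u ∈ W2) := by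
    intro x hx hxc u
    constructor
    · intro h
      have huB : u ∈ B := by
        by_contra huB
        exact hxc (boundary_cut hB (compBip_sub1 hbip hx) huB h)
      exact compBip_opp hbip hx huB h
    · intro h; exact compBip_adj hbip hx h
  intro u; rw [key ht1 htcut u, key hs1 hscut u]

lemma twin_finish [Fintype V] (hconn : G.Connected)
    {z t : V} {B W1 W2 : Set V} (hB : IsBlockSet G B) (hbip : CompBipOn G B W1 W2)
    (ht1 : t ∈ W1) (htcut : ¬ CutVtx G t) (hzB : z ∉ B)
    (hcnt : (S ∩ (W1 \ cutSet G)).ncard = 1) :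
    ∃ s ∈ S, G.dist z s = G.dist z t := by
  obtain ⟨s, hs⟩ := Set.ncard_eq_one.1 hcnt
  have hsmem : s ∈ S ∩ (W1 \ cutSet G) := by rw [hs]; rfl
  have hzt : z ≠ t := fun h => hzB (h ▸ compBip_sub1 hbip ht1)
  have hzs : z ≠ s := fun h => hzB (h ▸ compBip_sub1 hbip hsmem.2.1)
  exact ⟨s, hsmem.1,
    twin_dist hconn hzt hzs (part_twin hB hbip ht1 htcut hsmem.2.1 hsmem.2.2)⟩

lemma entry_point (hconn : G.Connected) {B : Set V} (hB : IsBlockSet G B)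
    {z t : V} (hzB : z ∉ B) (htB : t ∈ B) :
    ∃ y, y ∈ B ∧ CutVtx G y ∧ G.dist z y + G.dist y t ≤ G.dist z t ∧
      ∃ W1 : G.Walk z y, ∀ x ∈ W1.support, x ∈ B → x = y := by
  obtain ⟨W, hW⟩ := (hconn z t).exists_walk_length_eq_dist
  obtain ⟨c, W1, W2, hcB, hmem, -, hlen⟩ := firstHit W htB
  have hzc : z ≠ c := fun h => hzB (h ▸ hcB)
  obtain ⟨u, huc, huW, hune⟩ := exists_adj_end W1 hzc
  have huB : u ∉ B := fun h => hune (hmem u huW h)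
  refine ⟨c, hcB, boundary_cut hB hcB huB huc.symm, ?_, W1, hmem⟩
  have h1 : G.dist z c ≤ W1.length := SimpleGraph.dist_le _
  have h2 : G.dist c t ≤ W2.length := SimpleGraph.dist_le _
  omega

/-- the descent beyond a cut vertex at distance `e-1`. -/
lemma descend [Fintype V] (hG : ClassB G) (hS : AssocSet G S)
    {z cb : V} (hcb : CutVtx G cb) (hzcb : z ≠ cb)
    (hdcb : G.dist z cb + 1 = ecc G z) (he3 : 3 ≤ ecc G z)
    (hno : ∀ s ∈ S, G.dist z s < ecc G z) : False := by
  classical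
  have hconn := hG.1.1
  obtain ⟨w, hwcb, hsep⟩ := sep_exists hconn hcb hzcb
  have h1 : G.dist z cb + G.dist cb w ≤ G.dist z w := sep_dist hconn hsep
  have h2 : G.dist z w ≤ ecc G z := dist_le_ecc z w
  have h3 : 1 ≤ G.dist cb w := dist_pos_of_ne hconn (Ne.symm hwcb)
  have hdw : G.dist z w = ecc G z := by omega
  have hcbw : G.dist cb w = 1 := by omega
  have hadj : G.Adj cb w := adj_of_dist_eq_one hcbw
  have hwS : w ∉ S := fun h => by have := hno w h; omega
  have hwcut : ¬ CutVtx G w := fun h => hwS (hS.1 w h)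
  obtain ⟨Bw, hBw, hcbB, hwB⟩ := block_of_adj hadj
  obtain ⟨P1, P2, hbip0⟩ := hG.1.2 Bw hBw
  have hzBw : z ∉ Bw := by
    intro hz
    have := compBip_dist2 hbip0 hz hwB
    omega
  have hFar : ∀ x ∈ Bw, x ≠ cb → ecc G z ≤ G.dist z x := by
    intro x hx hxcb
    have hsx : VSep G cb z x := by
      intro W
      by_contra hcbW
      obtain ⟨-, -, hdel⟩ := block_facts hBw
      obtain ⟨-, hpairs⟩ := hdel cb hcbB
      obtain ⟨Wxw, hWxw⟩ := hpairs x ⟨hx, by simpa using hxcb⟩ w ⟨hwB, by simpa using hwcb⟩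
      have := hsep (W.append Wxw)
      rw [Walk.support_append] at this
      rcases List.mem_append.1 this with h | h
      · exact hcbW h
      · exact (hWxw cb (List.mem_of_mem_tail h)).2 rfl
    have h4 := sep_dist hconn hsx
    have h5 := dist_pos_of_ne hconn (Ne.symm hxcb)
    omega
  have key : ∀ {W1 W2 : Set V}, CompBipOn G Bw W1 W2 → w ∈ W1 → False := by
    intro W1 W2 hbip hw1
    have hcb2 : cb ∈ W2 := compBip_opp hbip hw1 hcbB hadj.symm
    by_cases hK : W1.ncard = 1 ∧ W2.ncard = 1
    · exact hwS ((hS.2 Bw W1 W2 hBw hbip).1 hK hwB)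
    have hbr := (hS.2 Bw W1 W2 hBw hbip).2 hK
    have hcutpos : 0 < (Bw ∩ cutSet G).ncard :=
      (Set.ncard_pos (Set.toFinite _)).2 (block_meets_cut hG hBw)
    have hcutle : (Bw ∩ cutSet G).ncard ≤ 2 := hG.2.2 Bw hBw
    have twin : (S ∩ (W1 \ cutSet G)).ncard = 1 → False := by
      intro hcnt
      obtain ⟨s, hsS, hseq⟩ := twin_finish hconn hBw hbip hw1 hwcut hzBw hcnt
      have := hno s hsS
      omega
    rcases (by omega : (Bw ∩ cutSet G).ncard = 1 ∨ (Bw ∩ cutSet G).ncard = 2) with hc1 | hc2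
    · exact twin (hbr.1 hc1).1
    · obtain ⟨c1', c2', hne', hset'⟩ := Set.ncard_eq_two.1 hc2
      have hc1'B : c1' ∈ Bw ∩ cutSet G := by rw [hset']; exact Set.mem_insert _ _
      have hc2'B : c2' ∈ Bw ∩ cutSet G := by rw [hset']; exact Set.mem_insert_iff.2 (Or.inr rfl)
      have hsplit : ∀ c' ∈ Bw ∩ cutSet G, c' ∈ W1 → False := by
        intro c' hc'B hc'1
        have hc'cb : c' ≠ cb := fun h =>
          Set.disjoint_left.1 hbip.2.2.1 (h ▸ hc'1) hcb2
        have := hFar c' hc'B.1 hc'cb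
        have := hno c' (hS.1 c' hc'B.2)
        omega
      rcases (hbip.2.2.2.1 ▸ hc1'B.1 : c1' ∈ W1 ∪ W2) with m1 | m1
      · exact hsplit c1' hc1'B m1
      rcases (hbip.2.2.2.1 ▸ hc2'B.1 : c2' ∈ W1 ∪ W2) with m2 | m2
      · exact hsplit c2' hc2'B m2
      -- both cuts in W2
      have hW2cut : W2 ∩ cutSet G = {c1', c2'} := by
        apply Set.Subset.antisymm
        · intro x hx
          have : x ∈ Bw ∩ cutSet G := ⟨compBip_sub2 hbip hx.1, hx.2⟩
          rw [hset'] at this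
          exact this
        · rintro x (rfl | rfl)
          · exact ⟨m1, hc1'B.2⟩
          · exact ⟨m2, hc2'B.2⟩
      have hW2n : (W2 ∩ cutSet G).ncard = 2 := by
        rw [hW2cut]; exact Set.ncard_pair hne'
      exact twin ((hbr.2 hc2).2.1 hW2n).1
  rcases (hbip0.2.2.2.1 ▸ hwB : w ∈ P1 ∪ P2) with h | h
  · exact key hbip0 h
  · exact key (compBip_symm hbip0) h

lemma grand [Fintype V] (hG : ClassB G) (hS : AssocSet G S) (z : V)
    (he3 : 3 ≤ ecc G z) : ∃ s ∈ S, ecc G z ≤ G.dist z s := by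
  classical
  by_contra hno'
  push_neg at hno'
  have hno : ∀ s ∈ S, G.dist z s < ecc G z := hno'
  have hconn := hG.1.1
  obtain ⟨v, hv⟩ := ecc_exists (G := G) z
  have hvS : v ∉ S := fun h => by have := hno v h; omega
  have hvcut : ¬ CutVtx G v := fun h => hvS (hS.1 v h)
  have hzv : z ≠ v := fun h => by rw [← h, SimpleGraph.dist_self] at hv; omega
  obtain ⟨W, -⟩ := (hconn z v).exists_walk_length_eq_dist
  obtain ⟨u, huv, -, -⟩ := exists_adj_end W hzv
  obtain ⟨B, hB, huB, hvB⟩ := block_of_adj huv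
  obtain ⟨P1, P2, hbip0⟩ := hG.1.2 B hB
  have hzB : z ∉ B := by
    intro hz
    have := compBip_dist2 hbip0 hz hvB
    omega
  have key : ∀ {W1 W2 : Set V}, CompBipOn G B W1 W2 → v ∈ W1 → False := by
    intro W1 W2 hbip hv1
    by_cases hK : W1.ncard = 1 ∧ W2.ncard = 1
    · exact hvS ((hS.2 B W1 W2 hB hbip).1 hK hvB)
    have hbr := (hS.2 B W1 W2 hB hbip).2 hK
    have hcutpos : 0 < (B ∩ cutSet G).ncard :=
      (Set.ncard_pos (Set.toFinite _)).2 (block_meets_cut hG hB)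
    have hcutle : (B ∩ cutSet G).ncard ≤ 2 := hG.2.2 B hB
    have twin : (S ∩ (W1 \ cutSet G)).ncard = 1 → False := by
      intro hcnt
      obtain ⟨s, hsS, hseq⟩ := twin_finish hconn hB hbip hv1 hvcut hzB hcnt
      have := hno s hsS
      omega
    rcases (by omega : (B ∩ cutSet G).ncard = 1 ∨ (B ∩ cutSet G).ncard = 2) with hc1 | hc2
    · exact twin (hbr.1 hc1).1
    · obtain ⟨c1, c2, hne, hset⟩ := Set.ncard_eq_two.1 hc2
      have hc1B : c1 ∈ B ∩ cutSet G := by rw [hset]; exact Set.mem_insert _ _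
      have hc2B : c2 ∈ B ∩ cutSet G := by rw [hset]; exact Set.mem_insert_iff.2 (Or.inr rfl)
      -- a cut vertex of B in the part opposite to v finishes via descend
      have hdesc : ∀ c' ∈ B ∩ cutSet G, c' ∈ W2 → False := by
        intro c' hc'B hc'2
        have hc'S : c' ∈ S := hS.1 c' hc'B.2
        have hlt := hno c' hc'S
        have htri : G.dist z v ≤ G.dist z c' + G.dist c' v := hconn.dist_triangle
        have hd1 : G.dist c' v ≤ 1 := by
          simpa using SimpleGraph.dist_le (Walk.cons (compBip_adj hbip hv1 hc'2).symm Walk.nil)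
        have hzc' : z ≠ c' := fun h => hzB (h ▸ hc'B.1)
        exact descend hG hS hc'B.2 hzc' (by omega) he3 hno
      rcases (hbip.2.2.2.1 ▸ hc1B.1 : c1 ∈ W1 ∪ W2) with m1 | m1
      swap
      · exact hdesc c1 hc1B m1
      rcases (hbip.2.2.2.1 ▸ hc2B.1 : c2 ∈ W1 ∪ W2) with m2 | m2
      swap
      · exact hdesc c2 hc2B m2
      -- both cut vertices in v's part W1 : the two-approach contradiction
      have hnadj : ¬ G.Adj c1 c2 := compBip_nadj hbip m1 m2
      have hd12 : 2 ≤ G.dist c1 c2 := by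
        have hge := dist_pos_of_ne hconn hne
        rcases (by omega : G.dist c1 c2 = 1 ∨ 2 ≤ G.dist c1 c2) with h | h
        · exact absurd (adj_of_dist_eq_one h) hnadj
        · exact h
      have hbound : ∀ c' ∈ B ∩ cutSet G, ecc G z ≤ G.dist z c' + 2 ∧
          G.dist z c' + 1 ≤ ecc G z := by
        intro c' hc'B
        have htri : G.dist z v ≤ G.dist z c' + G.dist c' v := hconn.dist_triangle
        have hd2 : G.dist c' v ≤ 2 := compBip_dist2 hbip hc'B.1 hvB
        have hlt := hno c' (hS.1 c' hc'B.2)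
        omega
      -- entry points towards c1 and c2
      obtain ⟨y1, hy1B, hy1cut, hy1d, Wa, hWa⟩ := entry_point hconn hB hzB hc1B.1
      obtain ⟨y2, hy2B, hy2cut, hy2d, Wb, hWb⟩ := entry_point hconn hB hzB hc2B.1
      have hy1mem : y1 ∈ B ∩ cutSet G := ⟨hy1B, hy1cut⟩
      have hy2mem : y2 ∈ B ∩ cutSet G := ⟨hy2B, hy2cut⟩
      rw [hset] at hy1mem hy2mem
      have hb1 := hbound c1 hc1B
      have hb2 := hbound c2 hc2B
      have hy1c1 : y1 = c1 := by
        rcases hy1mem with h | h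
        · exact h
        · -- y1 = c2 : distance contradiction
          exfalso
          subst h
          have hcomm : G.dist y1 c1 = G.dist c1 y1 := SimpleGraph.dist_comm
          omega
      have hy2c2 : y2 = c2 := by
        rcases hy2mem with h | h
        · exfalso
          subst h
          have hcomm : G.dist y2 c2 = G.dist c2 y2 := SimpleGraph.dist_comm
          omega
        · exact h
      subst hy1c1
      subst hy2c2
      exact two_approach hB hne hnadj hc1B.1 hc2B.1 Wa hWa Wb hWb
  rcases (hbip0.2.2.2.1 ▸ hvB : v ∈ P1 ∪ P2) with h | h
  · exact key hbip0 h
  · exact key (compBip_symm hbip0) h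


end AuxBlocks

theorem stmt_10 {V : Type*} [Fintype V] (G : SimpleGraph V) (hG : ClassB G)
    (h4 : 4 ≤ gdiam G) (S : Set V) (hS : AssocSet G S) :
    ∀ z : S, z ∈ gcenter (G.induce S) → z.1 ∈ gcenter G := by
  classical
  rintro ⟨z, hzS⟩ hz
  have hzc : ecc (G.induce S) ⟨z, hzS⟩ = gradius (G.induce S) := hz
  have hconn := hG.1.1
  have hV : Nonempty V := ⟨z⟩
  have hdm : gdiam G ∈ Set.range (ecc G) :=
    Nat.sSup_mem ⟨_, ⟨z, rfl⟩⟩ ((Set.finite_range _).bddAbove)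
  obtain ⟨u₀, hu₀⟩ := hdm
  obtain ⟨w₀, hw₀⟩ := ecc_exists (G := G) u₀
  have hneq : u₀ ≠ w₀ := by
    intro h
    rw [← h, SimpleGraph.dist_self] at hw₀
    omega
  have hnbr : ∀ x : V, ∃ y, G.Adj x y := exists_nbr hconn hneq
  have hrad2 : 2 ≤ gradius G := two_le_gradius hconn h4
  obtain ⟨c₀, hc₀⟩ := gradius_exists (G := G)
  obtain ⟨s₀, hs₀S, hs₀fix, hs₀N⟩ := rep_exists hG hS hnbr c₀
  have hs₀ecc : ecc G s₀ ≤ gradius G := by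
    refine ecc_le fun x => ?_
    by_cases hx : x = c₀
    · subst hx
      obtain ⟨y, hy⟩ := hnbr x
      have h2 : G.dist s₀ x ≤ 2 := by
        simpa using SimpleGraph.dist_le (Walk.cons (hs₀N y hy) (Walk.cons hy.symm Walk.nil))
      omega
    · have h1 : G.dist x s₀ ≤ G.dist x c₀ := dist_le_of_nbr_subset hconn hs₀N hx
      have h2 : G.dist s₀ x = G.dist x s₀ := SimpleGraph.dist_comm
      have h3 : G.dist x c₀ = G.dist c₀ x := SimpleGraph.dist_comm
      have h4' : G.dist c₀ x ≤ ecc G c₀ := dist_le_ecc c₀ x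
      omega
  have hr_le : gradius G ≤ ecc G z := gradius_le_ecc z
  have hgoal : ecc G z = gradius G := by
    rcases le_or_gt (ecc G z) 2 with he2 | he3
    · omega
    · obtain ⟨s, hsS, hds⟩ := grand hG hS z he3
      have h1 : ecc G z ≤ ecc (G.induce S) ⟨z, hzS⟩ := by
        have hde : (G.induce S).dist ⟨z, hzS⟩ ⟨s, hsS⟩ = G.dist z s :=
          dist_induce_eq hG hS hnbr hzS hsS
        have := dist_le_ecc (G := G.induce S) (⟨z, hzS⟩ : S) ⟨s, hsS⟩
        omega
      have h3 : gradius (G.induce S) ≤ ecc (G.induce S) ⟨s₀, hs₀S⟩ := gradius_le_ecc _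
      have h4' : ecc (G.induce S) ⟨s₀, hs₀S⟩ ≤ gradius G := by
        refine ecc_le fun t => ?_
        have hde : (G.induce S).dist ⟨s₀, hs₀S⟩ ⟨t.1, t.2⟩ = G.dist s₀ t.1 :=
          dist_induce_eq hG hS hnbr hs₀S t.2
        have h5 : G.dist s₀ t.1 ≤ ecc G s₀ := dist_le_ecc s₀ t.1
        have h6 : (G.induce S).dist ⟨s₀, hs₀S⟩ t = (G.induce S).dist ⟨s₀, hs₀S⟩ ⟨t.1, t.2⟩ := rfl
        omega
      omega
  exact hgoal
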